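/- arXiv:2003.09673 — 4 statements merged into one kernel-verified Lean document; each statement's English description precedes it below -/
import Mathlib

section
/- Let D, d, d_e be positive integers with d_e ≤ d ≤ D. Let f : ℝ^D → ℝ have effective subspace spanned by the columns of a matrix U ∈ ℝ^{D×d_e} with orthonormal columns, i.e. f(x) = f(U Uᵀ x) for all x ∈ ℝ^D. Then for every fixed point x ∈ ℝ^D, for almost every D×d matrix A with respect to the Gaussian matrix measure there exists y ∈ ℝ^d such that f(A y) = f(x). In particular, if x* is a global minimizer of f with value f*, then for almost every such A there exists y* ∈ ℝ^d with f(A y*) = f*. -/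
open MeasureTheory ProbabilityTheory Matrix

noncomputable def gaussMatrix (D d : ℕ) : Measure (Fin D → Fin d → ℝ) :=
  Measure.pi fun _ : Fin D => Measure.pi fun _ : Fin d => gaussianReal 0 1

noncomputable def chiSq (n : ℕ) : Measure ℝ := gammaMeasure (n / 2) (1 / 2)

lemma gauss_finite_null {s : Set ℝ} (hs : s.Finite) : gaussianReal 0 1 s = 0 :=
  gaussianReal_absolutelyContinuous 0 one_ne_zero (hs.measure_zero _)

lemma eval_zero_measurableSet {m : Type*} [Countable m] (q : MvPolynomial m ℝ) :
    MeasurableSet {x : m → ℝ | MvPolynomial.eval x q = 0} :=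
  (MvPolynomial.continuous_eval q).measurable (measurableSet_singleton 0)

/-- The zero set of a nonzero multivariate polynomial is null for the iid standard
Gaussian product measure. -/
lemma gaussPi_eval_zero_fin :
    ∀ (n : ℕ) (p : MvPolynomial (Fin n) ℝ), p ≠ 0 →
    (Measure.pi fun _ : Fin n => gaussianReal 0 1) {x | MvPolynomial.eval x p = 0} = 0 := by
  intro n
  induction n with
  | zero =>
    intro p hp
    obtain ⟨a, rfl⟩ := MvPolynomial.C_surjective (Fin 0) p
    have ha : a ≠ 0 := fun h => hp (by simp [h])
    have hset : {x : Fin 0 → ℝ | MvPolynomial.eval x (MvPolynomial.C a) = 0} = ∅ := by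
      ext x; simp [ha]
    rw [hset, measure_empty]
  | succ n ih =>
    intro p hp
    set S : Set (Fin (n + 1) → ℝ) := {x | MvPolynomial.eval x p = 0} with hS
    have hSmeas : MeasurableSet S := eval_zero_measurableSet p
    set e := MeasurableEquiv.piFinSuccAbove (fun _ : Fin (n + 1) => ℝ) 0
    have mp := measurePreserving_piFinSuccAbove (fun _ : Fin (n + 1) => gaussianReal 0 1) 0
    set T : Set (ℝ × (Fin n → ℝ)) := e.symm ⁻¹' S with hT
    have hTmeas : MeasurableSet T := e.symm.measurable hSmeas
    have hpre : e ⁻¹' T = S := by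
      rw [hT, ← Set.preimage_comp]
      simp
    have key : (Measure.pi fun _ : Fin (n + 1) => gaussianReal 0 1) S
        = ((gaussianReal 0 1).prod (Measure.pi fun _ : Fin n => gaussianReal 0 1)) T := by
      rw [← hpre]
      exact mp.measure_preimage_equiv T
    rw [key]
    -- swap the product
    have hswap : ((gaussianReal 0 1).prod (Measure.pi fun _ : Fin n => gaussianReal 0 1)) T
        = ((Measure.pi fun _ : Fin n => gaussianReal 0 1).prod (gaussianReal 0 1))
            (Prod.swap ⁻¹' T) := by
      rw [← Measure.prod_swap, Measure.map_apply measurable_swap hTmeas]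
    rw [hswap]
    rw [Measure.measure_prod_null (measurable_swap hTmeas)]
    -- the polynomial in the last variable
    set Q := MvPolynomial.finSuccEquiv ℝ n p with hQ
    have hQne : Q ≠ 0 := by
      rw [hQ, Ne, EmbeddingLike.map_eq_zero_iff]
      exact hp
    have hcoeff : Q.coeff Q.natDegree ≠ 0 := by
      have := Polynomial.leadingCoeff_ne_zero.mpr hQne
      rwa [Polynomial.leadingCoeff] at this
    have hae : ∀ᵐ s ∂(Measure.pi fun _ : Fin n => gaussianReal 0 1),
        MvPolynomial.eval s (Q.coeff Q.natDegree) ≠ 0 := by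
      rw [ae_iff]
      have : {s : Fin n → ℝ | ¬ MvPolynomial.eval s (Q.coeff Q.natDegree) ≠ 0}
          = {s | MvPolynomial.eval s (Q.coeff Q.natDegree) = 0} := by
        ext s; simp
      rw [this]
      exact ih _ hcoeff
    filter_upwards [hae] with s hs
    -- the slice is the root set of a nonzero one-variable polynomial
    have hslice : (Prod.mk s ⁻¹' (Prod.swap ⁻¹' T))
        = {y : ℝ | Polynomial.eval y (Polynomial.map (MvPolynomial.eval s) Q) = 0} := by
      ext y
      have hsymm : e.symm (y, s) = Fin.cons y s := by
        show (MeasurableEquiv.piFinSuccAbove (fun _ : Fin (n + 1) => ℝ) 0).symm (y, s)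
          = Fin.cons y s
        simp [MeasurableEquiv.piFinSuccAbove, Fin.insertNthEquiv,
          Fin.consEquiv, Fin.insertNth_zero']
      simp only [Set.mem_preimage, Prod.swap_prod_mk, hT, Set.mem_setOf_eq, hsymm, hS]
      rw [MvPolynomial.eval_eq_eval_mv_eval']
    rw [hslice]
    apply gauss_finite_null
    have hqs : Polynomial.map (MvPolynomial.eval s) Q ≠ 0 := by
      intro h
      apply hs
      have := congrArg (fun r => Polynomial.coeff r Q.natDegree) h
      simpa [Polynomial.coeff_map] using this
    simpa [Polynomial.IsRoot] using Polynomial.finite_setOf_isRoot hqs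

/-- Version over an arbitrary finite index type. -/
lemma gaussPi_eval_zero {ι : Type} [Fintype ι] (p : MvPolynomial ι ℝ) (hp : p ≠ 0) :
    (Measure.pi fun _ : ι => gaussianReal 0 1) {x | MvPolynomial.eval x p = 0} = 0 := by
  classical
  set n := Fintype.card ι
  set e : Fin n ≃ ι := (Fintype.equivFin ι).symm with he
  have mp := measurePreserving_piCongrLeft (fun _ : ι => gaussianReal 0 1) e
  set c := MeasurableEquiv.piCongrLeft (fun _ : ι => ℝ) e with hc
  have key := mp.measure_preimage_equiv {x : ι → ℝ | MvPolynomial.eval x p = 0}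
  rw [← key]
  have hceq : ∀ z : Fin n → ℝ, (c z : ι → ℝ) = z ∘ e.symm := by
    intro z
    funext i
    obtain ⟨j, rfl⟩ := e.surjective i
    rw [hc, MeasurableEquiv.coe_piCongrLeft]
    rw [Equiv.piCongrLeft_apply_apply]
    simp
  have hpre : (c ⁻¹' {x : ι → ℝ | MvPolynomial.eval x p = 0})
      = {z : Fin n → ℝ | MvPolynomial.eval z (MvPolynomial.rename e.symm p) = 0} := by
    ext z
    simp only [Set.mem_preimage, Set.mem_setOf_eq, hceq z, MvPolynomial.eval_rename]
  rw [hpre]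
  apply gaussPi_eval_zero_fin
  intro h
  exact hp (MvPolynomial.rename_injective _ e.symm.injective (by simp [h]))

lemma measurable_uncurry_mat (D d : ℕ) :
    Measurable (fun A : Fin D → Fin d → ℝ => fun q : Fin D × Fin d => A q.1 q.2) :=
  measurable_pi_lambda _ fun q => (measurable_pi_apply q.2).comp (measurable_pi_apply q.1)

lemma map_uncurry_gaussMatrix (D d : ℕ) :
    Measure.map (fun A : Fin D → Fin d → ℝ => fun q : Fin D × Fin d => A q.1 q.2)
        (gaussMatrix D d)
      = Measure.pi fun _ : Fin D × Fin d => gaussianReal 0 1 := by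
  refine (Measure.pi_eq fun s hs => ?_).symm
  rw [Measure.map_apply (measurable_uncurry_mat D d) (MeasurableSet.univ_pi hs)]
  have hpre : (fun A : Fin D → Fin d → ℝ => fun q : Fin D × Fin d => A q.1 q.2) ⁻¹'
      Set.univ.pi s = Set.univ.pi fun j : Fin D => Set.univ.pi fun k : Fin d => s (j, k) := by
    ext A
    simp only [Set.mem_preimage, Set.mem_pi, Set.mem_univ, forall_true_left]
    exact Prod.forall
  rw [hpre, gaussMatrix, Measure.pi_pi]
  simp_rw [Measure.pi_pi]
  rw [← Fintype.prod_prod_type (f := fun q : Fin D × Fin d => gaussianReal 0 1 (s q))]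

theorem stmt0 (D d de : ℕ) (hD : 0 < D) (hd : 0 < d) (hde : 0 < de)
    (hded : de ≤ d) (hdD : d ≤ D)
    (f : (Fin D → ℝ) → ℝ) (U : Matrix (Fin D) (Fin de) ℝ)
    (hU : U.transpose * U = 1)
    (heff : ∀ x : Fin D → ℝ, f x = f (U.mulVec (U.transpose.mulVec x))) :
    (∀ x : Fin D → ℝ,
      ∀ᵐ A ∂ (gaussMatrix D d), ∃ y : Fin d → ℝ, f (Matrix.mulVec A y) = f x) ∧
    (∀ xstar : Fin D → ℝ, (∀ x : Fin D → ℝ, f xstar ≤ f x) →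
      ∀ᵐ A ∂ (gaussMatrix D d), ∃ ystar : Fin d → ℝ, f (Matrix.mulVec A ystar) = f xstar) := by
  classical
  have main : ∀ x : Fin D → ℝ,
      ∀ᵐ A ∂ (gaussMatrix D d), ∃ y : Fin d → ℝ, f (Matrix.mulVec A y) = f x := by
    intro x
    -- the determinant polynomial
    set p : MvPolynomial (Fin D × Fin d) ℝ :=
      (Matrix.of fun l l' : Fin de => ∑ j : Fin D,
        MvPolynomial.C (U j l) * MvPolynomial.X (j, Fin.castLE hded l')).det with hpdef
    -- evaluation of p gives the determinant of the matrix M A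
    have heval : ∀ A : Fin D → Fin d → ℝ,
        MvPolynomial.eval (fun q : Fin D × Fin d => A q.1 q.2) p
          = (Matrix.of fun l l' : Fin de =>
              ∑ j : Fin D, U j l * A j (Fin.castLE hded l')).det := by
      intro A
      rw [hpdef, RingHom.map_det (MvPolynomial.eval fun q : Fin D × Fin d => A q.1 q.2)]
      congr 1
      ext l l'
      simp [Matrix.map_apply]
    -- p is nonzero: evaluate at an "uncurried U"
    have hpne : p ≠ 0 := by
      intro h
      set A0 : Fin D → Fin d → ℝ := fun j k =>
        if hk : (k : ℕ) < de then U j ⟨(k : ℕ), hk⟩ else 0 with hA0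
      have h1 : MvPolynomial.eval (fun q : Fin D × Fin d => A0 q.1 q.2) p = 1 := by
        rw [heval A0]
        have hM : (Matrix.of fun l l' : Fin de =>
            ∑ j : Fin D, U j l * A0 j (Fin.castLE hded l')) = (1 : Matrix (Fin de) (Fin de) ℝ) := by
          ext l l'
          have hsum : ∑ j : Fin D, U j l * A0 j (Fin.castLE hded l')
              = ∑ j : Fin D, U j l * U j l' := by
            refine Finset.sum_congr rfl fun j _ => ?_
            congr 1
            have hlt : ((Fin.castLE hded l' : Fin d) : ℕ) < de := l'.isLt
            have hA0v : A0 j (Fin.castLE hded l')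
                = U j ⟨((Fin.castLE hded l' : Fin d) : ℕ), hlt⟩ := by
              simp only [hA0]
              rw [dif_pos hlt]
            rw [hA0v]
            congr 1
          rw [Matrix.of_apply, hsum]
          have := congrFun (congrFun hU l) l'
          rw [← this, Matrix.mul_apply]
          refine Finset.sum_congr rfl fun j _ => ?_
          rw [Matrix.transpose_apply]
        rw [hM, Matrix.det_one]
      rw [h] at h1
      simpa using h1
    -- the zero set of p is null
    have hnull : gaussMatrix D d
        {A : Fin D → Fin d → ℝ |
          MvPolynomial.eval (fun q : Fin D × Fin d => A q.1 q.2) p = 0} = 0 := by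
      have hZ : MeasurableSet {x : Fin D × Fin d → ℝ | MvPolynomial.eval x p = 0} :=
        eval_zero_measurableSet p
      have : {A : Fin D → Fin d → ℝ |
            MvPolynomial.eval (fun q : Fin D × Fin d => A q.1 q.2) p = 0}
          = (fun A : Fin D → Fin d → ℝ => fun q : Fin D × Fin d => A q.1 q.2) ⁻¹'
              {x : Fin D × Fin d → ℝ | MvPolynomial.eval x p = 0} := rfl
      rw [this, ← Measure.map_apply (measurable_uncurry_mat D d) hZ,
        map_uncurry_gaussMatrix D d]
      exact gaussPi_eval_zero p hpne
    -- conclude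
    change ∀ᵐ A : Fin D → Fin d → ℝ ∂ (gaussMatrix D d), ∃ y : Fin d → ℝ, f (Matrix.mulVec A y) = f x
    rw [ae_iff]
    have hsub : {A : Fin D → Fin d → ℝ |
          ¬ ∃ y : Fin d → ℝ, f (Matrix.mulVec A y) = f x}
        ⊆ {A : Fin D → Fin d → ℝ |
            MvPolynomial.eval (fun q : Fin D × Fin d => A q.1 q.2) p = 0} := by
      intro A hA
      by_contra hdet
      apply hA
      set M : Matrix (Fin de) (Fin de) ℝ :=
        Matrix.of fun l l' : Fin de => ∑ j : Fin D, U j l * A j (Fin.castLE hded l') with hMdef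
      have hMdet : M.det ≠ 0 := by
        have hdet' : (MvPolynomial.eval fun q : Fin D × Fin d => A q.1 q.2) p ≠ 0 := hdet
        rw [heval A] at hdet'
        exact hdet'
      have hMunit : IsUnit M.det := isUnit_iff_ne_zero.mpr hMdet
      set z : Fin de → ℝ := M⁻¹.mulVec (U.transpose.mulVec x) with hz
      set Y : Matrix (Fin d) (Fin de) ℝ :=
        Matrix.of fun k l' => if k = Fin.castLE hded l' then 1 else 0 with hY
      set y : Fin d → ℝ := Y.mulVec z with hy
      refine ⟨y, ?_⟩
      have hkey1 : U.transpose.mulVec (Matrix.mulVec A y) = M.mulVec z := by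
        funext l
        simp only [Matrix.mulVec, dotProduct, Matrix.transpose_apply, hMdef, hy, hY,
          Matrix.of_apply]
        have hin : ∀ j : Fin D, (∑ k : Fin d, A j k *
            ∑ l' : Fin de, (if k = Fin.castLE hded l' then (1:ℝ) else 0) * z l')
            = ∑ l' : Fin de, A j (Fin.castLE hded l') * z l' := by
          intro j
          simp_rw [Finset.mul_sum, ite_mul, one_mul, zero_mul, mul_ite, mul_zero]
          rw [Finset.sum_comm]
          refine Finset.sum_congr rfl fun l' _ => ?_
          rw [Finset.sum_ite_eq' Finset.univ (Fin.castLE hded l') (fun k => A j k * z l')]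
          simp
        simp_rw [hin]
        simp_rw [Finset.mul_sum]
        rw [Finset.sum_comm]
        refine Finset.sum_congr rfl fun l' _ => ?_
        rw [Finset.sum_mul]
        refine Finset.sum_congr rfl fun j _ => (mul_assoc _ _ _).symm
      have hsolve : M.mulVec z = U.transpose.mulVec x := by
        rw [hz, Matrix.mulVec_mulVec, Matrix.mul_nonsing_inv M hMunit, Matrix.one_mulVec]
      have hkey : U.transpose.mulVec (Matrix.mulVec A y) = U.transpose.mulVec x := by
        rw [hkey1, hsolve]
      calc f (Matrix.mulVec A y)
            = f (U.mulVec (U.transpose.mulVec (Matrix.mulVec A y))) := heff _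
        _ = f (U.mulVec (U.transpose.mulVec x)) := by rw [hkey]
        _ = f x := (heff x).symm
    exact measure_mono_null hsub hnull
  exact ⟨main, fun xstar _ => main xstar⟩
end

section
/- Let n be a positive integer and let X be a chi-squared random variable with n degrees of freedom. Then for every x > 0, P[X ≤ x] ≤ (4 / (n(n+2)Γ(n/2))) · (1 + (n/2)·e^{−x/2}) · (x/2)^{n/2}. -/
open MeasureTheory ProbabilityTheory Matrix

theorem stmt10 (n : ℕ) (hn : 0 < n) (x : ℝ) (hx : 0 < x) :
    chiSq n (Set.Iic x) ≤ ENNReal.ofReal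
      ((4 / ((n : ℝ) * ((n : ℝ) + 2) * Real.Gamma ((n : ℝ) / 2))) *
        (1 + ((n : ℝ) / 2) * Real.exp (-x / 2)) * (x / 2) ^ ((n : ℝ) / 2)) := by
  have hnR : (0:ℝ) < n := by exact_mod_cast hn
  set a : ℝ := (n:ℝ) / 2 with ha_def
  have ha : 0 < a := by positivity
  have hΓ : 0 < Real.Gamma a := Real.Gamma_pos_of_pos ha
  set C : ℝ := (1/2:ℝ) ^ a / Real.Gamma a with hC
  have hCpos : 0 < C := by positivity
  set c2 : ℝ := (Real.exp (-x/2) - 1) / x with hc2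
  set g : ℝ → ℝ := fun t => C * (t ^ (a-1) + c2 * t ^ a) with hg
  -- key pointwise bound
  have key : ∀ t ∈ Set.Ioc (0:ℝ) x, gammaPDFReal a (1/2) t ≤ g t := by
    intro t ht
    obtain ⟨ht0, htx⟩ := ht
    have hexp : Real.exp (-(1/2 * t)) ≤ 1 + c2 * t := by
      have hs0 : 0 ≤ t / x := by positivity
      have hs1 : 0 ≤ 1 - t / x := by
        have : t / x ≤ 1 := (div_le_one hx).2 htx
        linarith
      have := convexOn_exp.2 (Set.mem_univ (0:ℝ)) (Set.mem_univ (-x/2)) hs1 hs0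
        (by field_simp; ring)
      simp only [smul_eq_mul, mul_zero, zero_add, Real.exp_zero, mul_one] at this
      have harg : t / x * (-x / 2) = -(1/2 * t) := by field_simp
      rw [harg] at this
      calc Real.exp (-(1/2*t)) ≤ (1 - t/x) + t/x * Real.exp (-x/2) := this
        _ = 1 + c2 * t := by rw [hc2]; field_simp; ring
    have htpow : 0 < t ^ (a - 1) := Real.rpow_pos_of_pos ht0 _
    have hta : t ^ (a-1) * t = t ^ a := by
      rw [← Real.rpow_add_one ht0.ne' (a-1)]; ring_nf
    calc gammaPDFReal a (1/2) t = C * (t ^ (a-1) * Real.exp (-(1/2 * t))) := by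
          rw [gammaPDFReal, if_pos ht0.le, hC]; ring
      _ ≤ C * (t ^ (a-1) * (1 + c2 * t)) := by
          apply mul_le_mul_of_nonneg_left _ hCpos.le
          exact mul_le_mul_of_nonneg_left hexp htpow.le
      _ = g t := by rw [hg]; simp only []; rw [← hta]; ring
  have hpdf_nonneg : ∀ t, 0 ≤ gammaPDFReal a (1/2) t :=
    gammaPDFReal_nonneg ha one_half_pos
  -- integrability of g on Ioc 0 x
  have h1 : IntervalIntegrable (fun t : ℝ => t ^ (a-1)) volume 0 x :=
    intervalIntegral.intervalIntegrable_rpow' (by linarith)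
  have h2 : IntervalIntegrable (fun t : ℝ => t ^ a) volume 0 x :=
    intervalIntegral.intervalIntegrable_rpow' (by linarith)
  have hgInt : IntervalIntegrable g volume 0 x := by
    have := ((h1.add (h2.const_mul c2)).const_mul C)
    simpa [hg, mul_add] using this
  have hgIntOn : IntegrableOn g (Set.Ioc 0 x) volume :=
    (intervalIntegrable_iff_integrableOn_Ioc_of_le hx.le).1 hgInt
  -- rewrite the measure
  have hmeas : chiSq n (Set.Iic x) = ∫⁻ t in Set.Iic x, gammaPDF a (1/2) t := by
    rw [chiSq, gammaMeasure, withDensity_apply _ measurableSet_Iic]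
  have hsplit : ∫⁻ t in Set.Iic x, gammaPDF a (1/2) t
      = ∫⁻ t in Set.Ioc 0 x, gammaPDF a (1/2) t := by
    rw [← Set.Iic_union_Ioc_eq_Iic hx.le,
      lintegral_union measurableSet_Ioc (Set.Iic_disjoint_Ioc le_rfl)]
    have h0 : ∫⁻ t in Set.Iic 0, gammaPDF a (1/2) t = 0 := by
      rw [← Measure.restrict_congr_set Iio_ae_eq_Iic,
        setLIntegral_congr_fun measurableSet_Iio
          (fun t (ht : t ∈ Set.Iio 0) => gammaPDF_of_neg ht),
        lintegral_zero]
    rw [h0, zero_add]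
  -- bound the lintegral
  have hbound : ∫⁻ t in Set.Ioc 0 x, gammaPDF a (1/2) t
      ≤ ∫⁻ t in Set.Ioc 0 x, ENNReal.ofReal (g t) := by
    apply setLIntegral_mono (by fun_prop)
    intro t ht
    exact ENNReal.ofReal_le_ofReal (key t ht)
  have hgnn : 0 ≤ᵐ[volume.restrict (Set.Ioc 0 x)] g :=
    (ae_restrict_iff' measurableSet_Ioc).2
      (ae_of_all _ fun t ht => le_trans (hpdf_nonneg t) (key t ht))
  have heq : ∫⁻ t in Set.Ioc 0 x, ENNReal.ofReal (g t)
      = ENNReal.ofReal (∫ t in Set.Ioc 0 x, g t) :=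
    (ofReal_integral_eq_lintegral_ofReal hgIntOn hgnn).symm
  -- compute the integral
  have hval : ∫ t in Set.Ioc 0 x, g t = C * (x ^ a / a + c2 * (x ^ (a+1) / (a+1))) := by
    rw [← intervalIntegral.integral_of_le hx.le]
    rw [hg]
    rw [intervalIntegral.integral_const_mul,
      intervalIntegral.integral_add h1 (h2.const_mul c2),
      intervalIntegral.integral_const_mul,
      integral_rpow (Or.inl (by linarith)),
      integral_rpow (Or.inl (by linarith))]
    rw [Real.zero_rpow (by linarith : a - 1 + 1 ≠ 0),
      Real.zero_rpow (by linarith : a + 1 ≠ 0)]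
    ring_nf
  -- final algebra
  have hfinal : C * (x ^ a / a + c2 * (x ^ (a+1) / (a+1)))
      = 4 / ((n : ℝ) * ((n : ℝ) + 2) * Real.Gamma a) *
        (1 + a * Real.exp (-x / 2)) * (x / 2) ^ a := by
    have hn2 : (n : ℝ) = 2 * a := by rw [ha_def]; ring
    have hxa : x ^ (a+1) = x ^ a * x := Real.rpow_add_one hx.ne' a
    have hhalf : ((1:ℝ)/2) ^ a = 1 / 2 ^ a := by
      rw [Real.div_rpow zero_le_one (by norm_num), Real.one_rpow]
    have hx2 : (x/2 : ℝ) ^ a = x ^ a / 2 ^ a := Real.div_rpow hx.le (by norm_num : (0:ℝ) ≤ 2) a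
    have h2a : (0:ℝ) < (2:ℝ) ^ a := Real.rpow_pos_of_pos two_pos a
    rw [hn2, hxa, hx2, hC, hhalf, hc2]
    field_simp
    ring
  rw [hmeas, hsplit]
  calc ∫⁻ t in Set.Ioc 0 x, gammaPDF a (1/2) t
      ≤ ∫⁻ t in Set.Ioc 0 x, ENNReal.ofReal (g t) := hbound
    _ = ENNReal.ofReal (∫ t in Set.Ioc 0 x, g t) := heq
    _ ≤ _ := by rw [hval, hfinal]
end

section
/- Let n be a positive integer, let X be a chi-squared random variable with n degrees of freedom, and let R = X^{−1/2} (the square root of the inverse chi-squared random variable Y = 1/X). Then the law of R is absolutely continuous with respect to Lebesgue measure on ℝ with density g(r) = (2^{−n/2+1}/Γ(n/2)) · r^{−n−1} · e^{−1/(2r²)} for r > 0 (and density 0 for r ≤ 0); that is, the pushforward of the chi-squared distribution with n degrees of freedom under t ↦ t^{−1/2} equals the measure with this Lebesgue density. -/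
open MeasureTheory ProbabilityTheory Matrix

theorem stmt11 (n : ℕ) (hn : 0 < n) :
    Measure.map (fun t : ℝ => t ^ (-(1 : ℝ) / 2)) (chiSq n)
      = volume.withDensity (fun r : ℝ => ENNReal.ofReal (
          if 0 < r then
            (2 : ℝ) ^ (-(n : ℝ) / 2 + 1) / Real.Gamma ((n : ℝ) / 2) *
              r ^ (-(n : ℝ) - 1) * Real.exp (-1 / (2 * r ^ 2))
          else 0)) := by
  set a : ℝ := (n : ℝ) / 2 with ha_def
  have hf_meas : Measurable (fun t : ℝ => t ^ (-(1 : ℝ) / 2)) := by fun_prop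
  ext t ht
  rw [Measure.map_apply hf_meas ht, chiSq, gammaMeasure,
    withDensity_apply _ (hf_meas ht), withDensity_apply _ ht]
  set S : Set ℝ := (fun t : ℝ => t ^ (-(1 : ℝ) / 2)) ⁻¹' t with hS_def
  -- reduce LHS to an integral over S ∩ Ioi 0
  have hpdf_ae : gammaPDF a (1/2) =ᵐ[volume] (Set.Ioi (0:ℝ)).indicator (gammaPDF a (1/2)) := by
    have h0 : ∀ᵐ x : ℝ ∂volume, x ∉ ({0} : Set ℝ) :=
      measure_eq_zero_iff_ae_notMem.mp (by simp)
    filter_upwards [h0] with x hx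
    rcases lt_trichotomy x 0 with h | h | h
    · rw [gammaPDF_of_neg h,
        Set.indicator_of_notMem (fun hc => absurd (Set.mem_Ioi.mp hc) (not_lt.mpr h.le))]
    · exact absurd (Set.mem_singleton_iff.mpr h) hx
    · rw [Set.indicator_of_mem (Set.mem_Ioi.mpr h)]
  have hLHS : ∫⁻ x in S, gammaPDF a (1/2) x
      = ∫⁻ x in Set.Ioi 0 ∩ S, gammaPDF a (1/2) x := by
    calc ∫⁻ x in S, gammaPDF a (1/2) x
        = ∫⁻ x in S, (Set.Ioi (0:ℝ)).indicator (gammaPDF a (1/2)) x :=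
          lintegral_congr_ae (ae_restrict_of_ae hpdf_ae)
      _ = _ := setLIntegral_indicator measurableSet_Ioi _
  have hRHS : ∫⁻ r in t, ENNReal.ofReal (
        if 0 < r then
          (2 : ℝ) ^ (-(n : ℝ) / 2 + 1) / Real.Gamma ((n : ℝ) / 2) *
            r ^ (-(n : ℝ) - 1) * Real.exp (-1 / (2 * r ^ 2))
        else 0)
      = ∫⁻ r in Set.Ioi 0 ∩ t, ENNReal.ofReal (
          (2 : ℝ) ^ (-(n : ℝ) / 2 + 1) / Real.Gamma ((n : ℝ) / 2) *
            r ^ (-(n : ℝ) - 1) * Real.exp (-1 / (2 * r ^ 2))) := by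
    rw [← setLIntegral_indicator measurableSet_Ioi]
    refine setLIntegral_congr_fun ht (fun r _ => ?_)
    by_cases h : 0 < r
    · rw [if_pos h, Set.indicator_of_mem (Set.mem_Ioi.mpr h)]
    · rw [if_neg h, Set.indicator_of_notMem (fun hc => h (Set.mem_Ioi.mp hc))]
      simp
  rw [hLHS, hRHS]
  -- the inverse map
  set φ : ℝ → ℝ := fun r => (r ^ 2)⁻¹ with hφ_def
  have himg : Set.Ioi 0 ∩ S = φ '' (Set.Ioi 0 ∩ t) := by
    ext x
    constructor
    · rintro ⟨hx, hxt⟩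
      have hx0 : (0:ℝ) < x := hx
      refine ⟨x ^ (-(1:ℝ)/2), ⟨Real.rpow_pos_of_pos hx0 _, hxt⟩, ?_⟩
      have : (x ^ (-(1:ℝ)/2)) ^ (2:ℕ) = x⁻¹ := by
        rw [← Real.rpow_natCast (x ^ (-(1:ℝ)/2)) 2, ← Real.rpow_mul hx0.le]
        norm_num
        exact (Real.rpow_neg_one x)
      simp only [hφ_def, this, inv_inv]
    · rintro ⟨r, ⟨hr, hrt⟩, rfl⟩
      have hr0 : (0:ℝ) < r := hr
      have hφr : (0:ℝ) < φ r := by positivity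
      refine ⟨hφr, ?_⟩
      have : φ r = r ^ (-(2:ℝ)) := by
        rw [Real.rpow_neg hr0.le, Real.rpow_two]
      show φ r ^ (-(1:ℝ)/2) ∈ t
      rw [this, ← Real.rpow_mul hr0.le]
      norm_num
      exact hrt
  rw [himg]
  -- change of variables
  have hs_meas : MeasurableSet (Set.Ioi (0:ℝ) ∩ t) := measurableSet_Ioi.inter ht
  have hderiv : ∀ x ∈ Set.Ioi (0:ℝ) ∩ t,
      HasFDerivWithinAt φ ((1 : ℝ →L[ℝ] ℝ).smulRight (-2 / x ^ 3)) (Set.Ioi (0:ℝ) ∩ t) x := by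
    rintro x ⟨hx, -⟩
    have hx0 : (0:ℝ) < x := hx
    have h1 : HasDerivAt φ (-(2 * x ^ 1) / (x ^ 2) ^ 2) x :=
      (hasDerivAt_pow 2 x).inv (by positivity)
    have h2 : -(2 * x ^ 1) / (x ^ 2) ^ 2 = -2 / x ^ 3 := by
      field_simp
    rw [h2] at h1
    exact h1.hasDerivWithinAt.hasFDerivWithinAt
  have hinj : Set.InjOn φ (Set.Ioi (0:ℝ) ∩ t) := by
    rintro p ⟨hp, -⟩ q ⟨hq, -⟩ h
    have hp0 : (0:ℝ) < p := hp
    have hq0 : (0:ℝ) < q := hq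
    have : p ^ 2 = q ^ 2 := inv_injective h
    nlinarith
  rw [lintegral_image_eq_lintegral_abs_det_fderiv_mul volume hs_meas hderiv hinj]
  refine setLIntegral_congr_fun hs_meas ?_
  rintro r ⟨hr, -⟩
  have hr0 : (0:ℝ) < r := hr
  beta_reduce
  rw [ContinuousLinearMap.smulRight_one_eq_toSpanSingleton, ContinuousLinearMap.det_toSpanSingleton]
  have hφr_nonneg : (0:ℝ) ≤ φ r := by positivity
  rw [gammaPDF_of_nonneg hφr_nonneg]
  have habs : |(-2 / r ^ 3 : ℝ)| = 2 / r ^ 3 := by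
    rw [abs_div, abs_neg]
    simp [abs_of_pos (by positivity : (0:ℝ) < r ^ 3)]
  rw [habs, ← ENNReal.ofReal_mul (by positivity)]
  congr 1
  -- real-number computation
  have e1 : (φ r) ^ (a - 1) = r ^ (-(n:ℝ) + 2) := by
    have : φ r = r ^ (-(2:ℝ)) := by rw [Real.rpow_neg hr0.le, Real.rpow_two]
    rw [this, ← Real.rpow_mul hr0.le]
    congr 1
    rw [ha_def]; ring
  have e2 : ((1:ℝ)/2) ^ a = 2 * (2:ℝ) ^ (-(n:ℝ)/2 + 1) / 4 := by
    have hna : -(n:ℝ)/2 = -a := by rw [ha_def]; ring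
    rw [hna, Real.rpow_add (by norm_num : (0:ℝ) < 2), Real.rpow_one,
      Real.rpow_neg (by norm_num : (0:ℝ) ≤ 2),
      ← Real.inv_rpow (by norm_num : (0:ℝ) ≤ 2), one_div]
    ring
  have e3 : r ^ (-(n:ℝ) - 1) = r ^ (-(n:ℝ) + 2) / r ^ 3 := by
    rw [← Real.rpow_natCast r 3, ← Real.rpow_sub hr0]
    congr 1
    push_cast; ring
  have e4 : Real.exp (-(1/2 * φ r)) = Real.exp (-1 / (2 * r ^ 2)) := by
    congr 1
    rw [hφ_def]
    field_simp
  rw [e1, e2, e3, e4, ha_def]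
  field_simp
  ring
end

section
/- Let d_e ≤ d be positive integers and let z ∈ ℝ^{d_e} be a fixed nonzero vector. For a d_e×d matrix B define y₂(B) = Bᵀ (B Bᵀ)⁻¹ z (defined for the almost-every B for which B Bᵀ is invertible, with an arbitrary value otherwise). Then the law of y₂ under the Gaussian matrix measure is spherically symmetric: for every orthogonal d×d matrix S, the pushforward of the Gaussian matrix measure under B ↦ S·y₂(B) equals the pushforward under B ↦ y₂(B). -/
open MeasureTheory ProbabilityTheory Matrix

open scoped ENNReal NNReal

lemma measurable_mulVec {d : ℕ} (S : Matrix (Fin d) (Fin d) ℝ) :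
    Measurable fun x : Fin d → ℝ => S.mulVec x := by
  refine measurable_pi_iff.mpr fun j => ?_
  simpa [Matrix.mulVec, dotProduct] using
    Finset.measurable_sum Finset.univ fun k _ => (by fun_prop : Measurable fun x : Fin d → ℝ => S j k * x k)

lemma map_withDensity_equiv {α β : Type*} [MeasurableSpace α] [MeasurableSpace β]
    (μ : Measure α) (e : α ≃ᵐ β) {f : α → ℝ≥0∞} (hf : Measurable f) :
    (μ.withDensity f).map e = (μ.map e).withDensity (f ∘ e.symm) := by
  ext s hs
  rw [Measure.map_apply e.measurable hs, withDensity_apply _ (e.measurable hs),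
    withDensity_apply _ hs,
    setLIntegral_map hs (hf.comp e.symm.measurable) e.measurable]
  refine setLIntegral_congr_fun (e.measurable hs) (fun x _ => ?_)
  simp

lemma prod_withDensity {α β : Type*} [MeasurableSpace α] [MeasurableSpace β]
    (μ : Measure α) (ν : Measure β) [SigmaFinite μ] [SigmaFinite ν]
    {f : α → ℝ≥0∞} {g : β → ℝ≥0∞} (hf : Measurable f) (hg : Measurable g)
    [SigmaFinite (μ.withDensity f)] [SigmaFinite (ν.withDensity g)] :
    (μ.withDensity f).prod (ν.withDensity g)
      = (μ.prod ν).withDensity fun p => f p.1 * g p.2 := by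
  refine Measure.prod_eq fun s t hs ht => ?_
  rw [withDensity_apply _ (hs.prod ht), ← Measure.prod_restrict,
    lintegral_prod_mul hf.aemeasurable hg.aemeasurable,
    withDensity_apply _ hs, withDensity_apply _ ht]

lemma pi_gauss_withDensity (n : ℕ) :
    (Measure.pi fun _ : Fin n => gaussianReal 0 1)
      = (volume : Measure (Fin n → ℝ)).withDensity
          fun x => ∏ i, gaussianPDF 0 1 (x i) := by
  induction n with
  | zero =>
      simp only [Finset.univ_eq_empty, Finset.prod_empty]
      rw [show (fun _ : Fin 0 → ℝ => (1 : ℝ≥0∞)) = 1 from rfl, withDensity_one,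
        MeasureTheory.volume_pi, Measure.pi_of_empty, Measure.pi_of_empty]
  | succ n ih =>
      have hg : gaussianReal 0 1 = (volume : Measure ℝ).withDensity (gaussianPDF 0 1) :=
        gaussianReal_of_var_ne_zero 0 one_ne_zero
      set e := MeasurableEquiv.piFinSuccAbove (fun _ : Fin (n + 1) => ℝ) 0 with he
      have h1 : MeasurePreserving e
          (Measure.pi fun _ : Fin (n+1) => gaussianReal 0 1)
          ((gaussianReal 0 1).prod (Measure.pi fun _ : Fin n => gaussianReal 0 1)) :=
        measurePreserving_piFinSuccAbove (fun _ : Fin (n+1) => gaussianReal 0 1) 0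
      have h2 : (Measure.pi fun _ : Fin (n+1) => gaussianReal 0 1)
          = ((gaussianReal 0 1).prod (Measure.pi fun _ : Fin n => gaussianReal 0 1)).map e.symm := by
        rw [← h1.map_eq, Measure.map_map e.symm.measurable e.measurable]
        simp
      rw [h2, ih, hg]
      haveI : SigmaFinite ((volume : Measure ℝ).withDensity (gaussianPDF 0 1)) := by
        rw [← hg]; infer_instance
      haveI : SigmaFinite ((volume : Measure (Fin n → ℝ)).withDensity
          fun x => ∏ i, gaussianPDF 0 1 (x i)) := by
        rw [← ih]; infer_instance
      rw [prod_withDensity _ _ (measurable_gaussianPDF 0 1)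
        (by exact Finset.measurable_prod _ fun i _ =>
          (measurable_gaussianPDF 0 1).comp (measurable_pi_apply i)),
        map_withDensity_equiv _ e.symm (by
          exact ((measurable_gaussianPDF 0 1).comp measurable_fst).mul
            (Finset.measurable_prod _ fun i _ =>
              (measurable_gaussianPDF 0 1).comp ((measurable_pi_apply i).comp measurable_snd)))]
      have hvol : ((volume : Measure ℝ).prod (volume : Measure (Fin n → ℝ))).map e.symm
          = (volume : Measure (Fin (n+1) → ℝ)) := by
        have h4 := (volume_preserving_piFinSuccAbove (fun _ : Fin (n + 1) => ℝ) 0)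
        have h3 : Measure.map (⇑e) (volume : Measure (Fin (n+1) → ℝ))
            = ((volume : Measure ℝ).prod (volume : Measure (Fin n → ℝ))) :=
          h4.map_eq.trans (Measure.volume_eq_prod _ _)
        rw [← h3, Measure.map_map e.symm.measurable e.measurable]
        simp
      rw [hvol]
      congr 1
      funext x
      have hx : (e.symm).symm x = e x := rfl
      simp only [Function.comp, MeasurableEquiv.symm_symm]
      rw [show (e x) = (x 0, fun j => x ((0 : Fin (n+1)).succAbove j)) from rfl]
      rw [Fin.prod_univ_succ]
      simp [Fin.succAbove_zero]

/-- The measurable equiv given by an orthogonal matrix. -/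
noncomputable def orthoEquiv {d : ℕ} (S : Matrix (Fin d) (Fin d) ℝ)
    (hS : S.transpose * S = 1) : (Fin d → ℝ) ≃ᵐ (Fin d → ℝ) where
  toFun := fun x => S.mulVec x
  invFun := fun x => S.transpose.mulVec x
  left_inv := fun x => by
    show S.transpose.mulVec (S.mulVec x) = x
    rw [Matrix.mulVec_mulVec, hS, Matrix.one_mulVec]
  right_inv := fun x => by
    show S.mulVec (S.transpose.mulVec x) = x
    rw [Matrix.mulVec_mulVec, mul_eq_one_comm.mp hS, Matrix.one_mulVec]
  measurable_toFun := measurable_mulVec S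
  measurable_invFun := measurable_mulVec S.transpose

lemma sq_sum_mulVec_transpose {d : ℕ} (S : Matrix (Fin d) (Fin d) ℝ)
    (hS : S.transpose * S = 1) (x : Fin d → ℝ) :
    ∑ i, (S.transpose.mulVec x i) ^ 2 = ∑ i, (x i) ^ 2 := by
  have h1 : ∀ v : Fin d → ℝ, ∑ i, (v i) ^ 2 = v ⬝ᵥ v := by
    intro v; simp [dotProduct, sq]
  rw [h1, h1, Matrix.dotProduct_mulVec, Matrix.vecMul_transpose,
    Matrix.mulVec_mulVec, mul_eq_one_comm.mp hS, Matrix.one_mulVec]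

lemma gauss_density_ortho {d : ℕ} (S : Matrix (Fin d) (Fin d) ℝ)
    (hS : S.transpose * S = 1) (x : Fin d → ℝ) :
    ∏ i, gaussianPDF 0 1 (S.transpose.mulVec x i) = ∏ i, gaussianPDF 0 1 (x i) := by
  have key : ∀ v : Fin d → ℝ, ∏ i, gaussianPDF 0 1 (v i)
      = ENNReal.ofReal ((Real.sqrt (2 * Real.pi))⁻¹ ^ d
          * Real.exp (- (∑ i, (v i) ^ 2) / 2)) := by
    intro v
    simp only [gaussianPDF]
    rw [← ENNReal.ofReal_prod_of_nonneg (fun i _ => gaussianPDFReal_nonneg 0 1 (v i))]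
    congr 1
    unfold gaussianPDFReal
    simp only [NNReal.coe_one, mul_one, sub_zero]
    rw [Finset.prod_mul_distrib, Finset.prod_const, ← Real.exp_sum]
    congr 1
    · simp [Finset.card_univ]
    · congr 1
      rw [neg_div, Finset.sum_div, ← Finset.sum_neg_distrib]
      exact Finset.sum_congr rfl fun i _ => by ring
  rw [key, key, sq_sum_mulVec_transpose S hS]

lemma stdGauss_ortho {d : ℕ} (S : Matrix (Fin d) (Fin d) ℝ)
    (hS : S.transpose * S = 1) :
    MeasurePreserving (fun x : Fin d → ℝ => S.mulVec x)
      (Measure.pi fun _ : Fin d => gaussianReal 0 1)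
      (Measure.pi fun _ : Fin d => gaussianReal 0 1) := by
  refine ⟨measurable_mulVec S, ?_⟩
  have hdet : S.det ≠ 0 := by
    intro h0
    have := congrArg Matrix.det hS
    rw [Matrix.det_mul, Matrix.det_transpose, Matrix.det_one, h0, mul_zero] at this
    exact zero_ne_one this
  have habs : |S.det| = 1 := by
    have := congrArg Matrix.det hS
    rw [Matrix.det_mul, Matrix.det_transpose, Matrix.det_one] at this
    have h2 : S.det ^ 2 = 1 := by nlinarith [this]
    rcases abs_cases S.det with ⟨ha, _⟩ | ⟨ha, _⟩ <;> nlinarith [h2]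
  have hG : Measurable fun x : Fin d → ℝ => ∏ i, gaussianPDF 0 1 (x i) :=
    Finset.measurable_prod _ fun i _ =>
      (measurable_gaussianPDF 0 1).comp (measurable_pi_apply i)
  have hvol : Measure.map (fun x : Fin d → ℝ => S.mulVec x) volume = volume := by
    have hld : LinearMap.det (Matrix.toLin' S) ≠ 0 := by
      rwa [LinearMap.det_toLin']
    have := Real.map_linearMap_volume_pi_eq_smul_volume_pi hld
    rw [LinearMap.det_toLin', show ⇑(Matrix.toLin' S) = fun x => S.mulVec x from rfl] at this
    rw [this, abs_inv, habs]
    simp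
  have hcoe : (fun x : Fin d → ℝ => S.mulVec x) = ⇑(orthoEquiv S hS) := rfl
  rw [pi_gauss_withDensity d, hcoe, map_withDensity_equiv _ _ hG, ← hcoe, hvol]
  congr 1
  funext x
  exact gauss_density_ortho S hS x


lemma measurableSet_spanSet (m d : ℕ) :
    MeasurableSet {p : (Fin m → (Fin d → ℝ)) × (Fin d → ℝ) |
      p.2 ∈ Submodule.span ℝ (Set.range p.1)} := by
  classical
  set F : ((Fin m → (Fin d → ℝ)) × (Fin d → ℝ)) → ℝ≥0∞ :=
    fun p => ⨅ (a : Fin m → ℚ), ENNReal.ofReal (dist p.2 (∑ j, (a j : ℝ) • p.1 j)) with hF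
  have hFmeas : Measurable F := by
    refine Measurable.iInf fun a => ?_
    have hc : Continuous fun p : (Fin m → (Fin d → ℝ)) × (Fin d → ℝ) =>
        dist p.2 (∑ j, (a j : ℝ) • p.1 j) := by
      refine Continuous.dist continuous_snd ?_
      exact continuous_finset_sum _ fun j _ => (by fun_prop : Continuous fun p : (Fin m → (Fin d → ℝ)) × (Fin d → ℝ) => (a j : ℝ) • p.1 j)
    exact (ENNReal.continuous_ofReal.comp hc).measurable
  have hset : {p : (Fin m → (Fin d → ℝ)) × (Fin d → ℝ) |
      p.2 ∈ Submodule.span ℝ (Set.range p.1)} = F ⁻¹' {0} := by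
    ext p
    simp only [Set.mem_setOf_eq, Set.mem_preimage, Set.mem_singleton_iff]
    constructor
    · intro hp
      obtain ⟨b, hb⟩ := (Submodule.mem_span_range_iff_exists_fun ℝ).mp hp
      refine le_antisymm ?_ zero_le
      refine ENNReal.le_of_forall_pos_le_add fun ε hε _ => ?_
      rw [zero_add]
      set C : ℝ := ∑ j, ‖p.1 j‖ with hC
      have hC0 : 0 ≤ C := Finset.sum_nonneg fun j _ => norm_nonneg _
      set δ : ℝ := (ε : ℝ) / (C + 1) with hδ
      have hδ0 : 0 < δ := div_pos (by exact_mod_cast hε) (by linarith)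
      choose a ha using fun j => exists_rat_near (b j) hδ0
      refine le_trans (iInf_le _ a) ?_
      have hdist : dist p.2 (∑ j, (a j : ℝ) • p.1 j) ≤ δ * C := by
        rw [← hb, dist_eq_norm, ← Finset.sum_sub_distrib]
        calc ‖∑ j, (b j • p.1 j - (a j : ℝ) • p.1 j)‖
            ≤ ∑ j, ‖b j • p.1 j - (a j : ℝ) • p.1 j‖ := norm_sum_le _ _
          _ = ∑ j, |b j - (a j : ℝ)| * ‖p.1 j‖ := by
              refine Finset.sum_congr rfl fun j _ => ?_
              rw [← sub_smul, norm_smul, Real.norm_eq_abs]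
          _ ≤ ∑ j, δ * ‖p.1 j‖ := by
              refine Finset.sum_le_sum fun j _ => ?_
              have := (ha j).le
              have habs : |b j - (a j : ℝ)| ≤ δ := this
              exact mul_le_mul_of_nonneg_right habs (norm_nonneg _)
          _ = δ * C := by rw [← Finset.mul_sum]
      have hlt : dist p.2 (∑ j, (a j : ℝ) • p.1 j) ≤ (ε : ℝ) := by
        refine hdist.trans ?_
        rw [hδ]
        rw [div_mul_eq_mul_div, div_le_iff₀ (by linarith)]
        have : (0:ℝ) ≤ (ε:ℝ) := ε.2
        nlinarith
      calc ENNReal.ofReal (dist p.2 (∑ j, (a j : ℝ) • p.1 j))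
          ≤ ENNReal.ofReal (ε : ℝ) := ENNReal.ofReal_le_ofReal hlt
        _ = (ε : ℝ≥0∞) := ENNReal.ofReal_coe_nnreal
    · intro hp
      have hclosed : IsClosed (Submodule.span ℝ (Set.range p.1) : Set (Fin d → ℝ)) :=
        Submodule.closed_of_finiteDimensional _
      have : p.2 ∈ closure (Submodule.span ℝ (Set.range p.1) : Set (Fin d → ℝ)) := by
        rw [Metric.mem_closure_iff]
        intro ε hε
        have h0 : F p < ENNReal.ofReal ε := by
          rw [hp]; exact ENNReal.ofReal_pos.mpr hε
        rw [hF] at h0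
        obtain ⟨a, ha⟩ := iInf_lt_iff.mp h0
        refine ⟨∑ j, (a j : ℝ) • p.1 j, ?_, ?_⟩
        · exact Submodule.sum_mem _ fun j _ =>
            Submodule.smul_mem _ _ (Submodule.subset_span (Set.mem_range_self j))
        · exact (ENNReal.ofReal_lt_ofReal_iff_of_nonneg dist_nonneg).mp ha
      rwa [hclosed.closure_eq] at this
  rw [hset]
  exact hFmeas (measurableSet_singleton 0)

lemma span_null {m d : ℕ} (hmd : m < d) (c : Fin m → (Fin d → ℝ)) :
    (Measure.pi fun _ : Fin d => gaussianReal 0 1)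
      ((Submodule.span ℝ (Set.range c) : Submodule ℝ (Fin d → ℝ)) : Set (Fin d → ℝ)) = 0 := by
  classical
  have hvol : (volume : Measure (Fin d → ℝ))
      ((Submodule.span ℝ (Set.range c) : Submodule ℝ (Fin d → ℝ)) : Set (Fin d → ℝ)) = 0 := by
    refine Measure.addHaar_submodule _ _ fun htop => ?_
    have h1 : Module.finrank ℝ (Submodule.span ℝ (Set.range c)) ≤ m := by
      refine le_trans (finrank_span_le_card _) ?_
      rw [Set.toFinset_range]
      exact (Finset.card_image_le).trans (by simp)
    rw [htop, finrank_top] at h1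
    have h2 : Module.finrank ℝ (Fin d → ℝ) = d := by simp
    omega
  have habs : (Measure.pi fun _ : Fin d => gaussianReal 0 1) ≪ (volume : Measure (Fin d → ℝ)) := by
    rw [pi_gauss_withDensity d]
    exact withDensity_absolutelyContinuous _ _
  exact habs hvol

lemma gram_bad_null (m d : ℕ) (hmd : m < d) :
    (Measure.pi fun _ : Fin (m+1) => (Measure.pi fun _ : Fin d => gaussianReal 0 1))
      {B : Fin (m+1) → Fin d → ℝ | ¬ IsUnit (Matrix.of B * (Matrix.of B).transpose)} = 0 := by
  classical
  set ν : Measure (Fin d → ℝ) := Measure.pi fun _ : Fin d => gaussianReal 0 1 with hν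
  set ρ : Measure (Fin m → Fin d → ℝ) := Measure.pi fun _ : Fin m => ν with hρ
  set Tsw : Set ((Fin m → (Fin d → ℝ)) × (Fin d → ℝ)) :=
    {p | p.2 ∈ Submodule.span ℝ (Set.range p.1)} with hTswdef
  have hTsw : MeasurableSet Tsw := measurableSet_spanSet m d
  set A : Fin (m+1) → Set (Fin (m+1) → Fin d → ℝ) := fun i =>
    (MeasurableEquiv.piFinSuccAbove (fun _ : Fin (m+1) => Fin d → ℝ) i) ⁻¹'
      (Prod.swap ⁻¹' Tsw) with hA
  have hsub : {B : Fin (m+1) → Fin d → ℝ | ¬ IsUnit (Matrix.of B * (Matrix.of B).transpose)}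
      ⊆ ⋃ i, A i := by
    intro B hB
    set M : Matrix (Fin (m+1)) (Fin d) ℝ := Matrix.of B with hM
    have hdet : (M * M.transpose).det = 0 := by
      by_contra hne
      exact hB ((Matrix.isUnit_iff_isUnit_det _).mpr (isUnit_iff_ne_zero.mpr hne))
    obtain ⟨v, hv0, hv⟩ := (Matrix.exists_mulVec_eq_zero_iff).mpr hdet
    have hw : M.transpose.mulVec v = 0 := by
      have h1 : (M.transpose.mulVec v) ⬝ᵥ (M.transpose.mulVec v) = 0 := by
        rw [Matrix.dotProduct_mulVec, Matrix.vecMul_transpose, Matrix.mulVec_mulVec, hv,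
          zero_dotProduct]
      exact dotProduct_self_eq_zero.mp h1
    obtain ⟨i, hvi'⟩ := Function.ne_iff.mp hv0
    have hvi : v i ≠ 0 := by simpa using hvi'
    have hsum : ∑ k, v k • B k = 0 := by
      funext j
      have h2 : ∑ k, B k j * v k = 0 := by
        simpa [Matrix.mulVec, dotProduct, hM] using congrFun hw j
      simp only [Finset.sum_apply, Pi.smul_apply, smul_eq_mul, Pi.zero_apply]
      simpa [mul_comm] using h2
    set p : Submodule ℝ (Fin d → ℝ) :=
      Submodule.span ℝ (Set.range fun j => B (i.succAbove j)) with hp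
    have hmem' : ∑ k ∈ Finset.univ.erase i, v k • B k ∈ p := by
      refine Submodule.sum_mem _ fun k hk => ?_
      obtain ⟨j, hj⟩ := Fin.exists_succAbove_eq (Finset.ne_of_mem_erase hk)
      exact Submodule.smul_mem _ _ (Submodule.subset_span ⟨j, by simpa using congrArg B hj⟩)
    have hBi : B i ∈ p := by
      have heq : v i • B i = - ∑ k ∈ Finset.univ.erase i, v k • B k := by
        have := Finset.add_sum_erase Finset.univ (fun k => v k • B k) (Finset.mem_univ i)
        rw [hsum] at this
        exact eq_neg_of_add_eq_zero_left this
      have : B i = (v i)⁻¹ • (v i • B i) := by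
        rw [smul_smul, inv_mul_cancel₀ hvi, one_smul]
      rw [this, heq]
      exact Submodule.smul_mem _ _ (Submodule.neg_mem _ hmem')
    refine Set.mem_iUnion.mpr ⟨i, ?_⟩
    exact hBi
  refine measure_mono_null hsub (measure_iUnion_null fun i => ?_)
  haveI : IsProbabilityMeasure ν := by rw [hν]; infer_instance
  have hmp := measurePreserving_piFinSuccAbove (fun _ : Fin (m+1) => ν) i
  have hswapmeas : MeasurableSet (Prod.swap ⁻¹' Tsw : Set ((Fin d → ℝ) × (Fin m → Fin d → ℝ))) :=
    measurable_swap hTsw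
  rw [hA]
  rw [hmp.measure_preimage hswapmeas.nullMeasurableSet]
  rw [← Measure.map_apply measurable_swap hTsw, Measure.prod_swap]
  rw [Measure.measure_prod_null hTsw]
  exact Filter.Eventually.of_forall fun c => span_null hmd c

theorem stmt13 (de d : ℕ) (hde : 0 < de) (hd : 0 < d) (h : de ≤ d)
    (z : Fin de → ℝ) (hz : z ≠ 0)
    (y2 : (Fin de → Fin d → ℝ) → (Fin d → ℝ))
    (hy2 : ∀ B : Fin de → Fin d → ℝ,
      IsUnit (Matrix.of B * (Matrix.of B).transpose) →
      y2 B = ((Matrix.of B).transpose *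
        (Matrix.of B * (Matrix.of B).transpose)⁻¹).mulVec z) :
    ∀ S : Matrix (Fin d) (Fin d) ℝ, S.transpose * S = 1 →
      Measure.map (fun B => S.mulVec (y2 B)) (gaussMatrix de d)
        = Measure.map y2 (gaussMatrix de d) := by
  intro S hS
  classical
  have hbad : gaussMatrix de d
      {B : Fin de → Fin d → ℝ | ¬ IsUnit (Matrix.of B * (Matrix.of B).transpose)} = 0 := by
    obtain ⟨m, rfl⟩ : ∃ m, de = m + 1 := ⟨de - 1, (Nat.succ_pred_eq_of_pos hde).symm⟩
    exact gram_bad_null m d (by omega)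
  have hT : MeasurePreserving (fun B : Fin de → Fin d → ℝ => fun i => S.mulVec (B i))
      (gaussMatrix de d) (gaussMatrix de d) := by
    rw [gaussMatrix]
    exact measurePreserving_pi _ _ (fun _ => stdGauss_ortho S hS)
  have hunit : ∀ᵐ B ∂(gaussMatrix de d), IsUnit (Matrix.of B * (Matrix.of B).transpose) :=
    ae_iff.mpr hbad
  have hae : (fun B : Fin de → Fin d → ℝ => y2 (fun i => S.mulVec (B i)))
      =ᵐ[gaussMatrix de d] (fun B => S.mulVec (y2 B)) := by
    filter_upwards [hunit] with B hBu
    set M : Matrix (Fin de) (Fin d) ℝ := Matrix.of B with hM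
    have hofTB : Matrix.of (fun i => S.mulVec (B i)) = M * S.transpose := by
      ext i j
      simp only [Matrix.mul_apply, Matrix.mulVec, dotProduct, Matrix.transpose_apply,
        Matrix.of_apply, mul_comm]
      rfl
    have hGram : (M * S.transpose) * (M * S.transpose).transpose = M * M.transpose := by
      rw [Matrix.transpose_mul, Matrix.transpose_transpose, Matrix.mul_assoc,
        ← Matrix.mul_assoc S.transpose, hS, Matrix.one_mul]
    have hBu' : IsUnit (Matrix.of (fun i => S.mulVec (B i))
        * (Matrix.of (fun i => S.mulVec (B i))).transpose) := by
      rw [hofTB, hGram]; exact hBu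
    rw [hy2 _ hBu', hy2 B hBu, hofTB, hGram, Matrix.transpose_mul,
      Matrix.transpose_transpose, Matrix.mul_assoc, ← Matrix.mulVec_mulVec]
  by_cases hmeas : AEMeasurable y2 (gaussMatrix de d)
  · have h1 : Measure.map y2 (gaussMatrix de d)
        = Measure.map y2 (Measure.map (fun B : Fin de → Fin d → ℝ => fun i => S.mulVec (B i))
            (gaussMatrix de d)) := by rw [hT.map_eq]
    rw [h1, AEMeasurable.map_map_of_aemeasurable (by rw [hT.map_eq]; exact hmeas) hT.aemeasurable]
    exact (Measure.map_congr hae).symm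
  · have hmeas2 : ¬ AEMeasurable (fun B : Fin de → Fin d → ℝ => S.mulVec (y2 B))
        (gaussMatrix de d) := by
      intro hc
      have h3 : AEMeasurable (fun B : Fin de → Fin d → ℝ =>
          S.transpose.mulVec (S.mulVec (y2 B))) (gaussMatrix de d) :=
        (measurable_mulVec S.transpose).comp_aemeasurable hc
      have hy : (fun B : Fin de → Fin d → ℝ => S.transpose.mulVec (S.mulVec (y2 B))) = y2 :=
        funext fun B => by rw [Matrix.mulVec_mulVec, hS, Matrix.one_mulVec]
      rw [hy] at h3
      exact hmeas h3
    rw [Measure.map_of_not_aemeasurable hmeas, Measure.map_of_not_aemeasurable hmeas2]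
end
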